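/- Let A be the free ℤ-module on symbols x^α (α ranging over finitely supported integer sequences), let l ∈ ℕ, let δ⁻_l : A → A be the ℤ-linear map with δ⁻_l(x^α) = Σ_{i=1}^{l} (α_i − 1) x^{α − ε_i}, and let D_l : A → A be the ℤ-linear map with D_l(x^α) = Σ_{σ ∈ S_l} sgn(σ) x^{α + σ − 1_l}, where σ is identified with the sequence (σ(1),…,σ(l),0,0,…) and 1_l is the sequence with 1 in positions 1,…,l and 0 elsewhere. Then D_l ∘ δ⁻_l = δ⁻_l ∘ D_l. -/

import Mathlib

open Finsupp
open scoped Classical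

/-- The row index of `k` in the standard tabloid of shape `α`: the least `i` such that
`k < α 0 + ⋯ + α i`. -/
noncomputable def rowIdx (α : ℕ →₀ ℤ) (k : ℕ) : ℕ := sInf {i | (k : ℤ) < ∑ j ∈ Finset.range (i + 1), α j}

/-- The Young subgroup of `S_n` associated to `α`: the stabilizer of the standard tabloid
whose rows are the consecutive blocks of `{0, …, n-1}` of sizes `α 0, α 1, …`. -/
def youngSubgroup (n : ℕ) (α : ℕ →₀ ℤ) : Subgroup (Equiv.Perm (Fin n)) where
  carrier := {σ | ∀ k : Fin n, rowIdx α (σ k) = rowIdx α k}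
  one_mem' := fun _ => rfl
  mul_mem' := by
    intro a b ha hb k
    simpa [Equiv.Perm.mul_apply] using (ha (b k)).trans (hb k)
  inv_mem' := by
    intro a ha k
    have := ha (a⁻¹ k)
    rw [show a (a⁻¹ k) = k from Equiv.apply_symm_apply a k] at this
    exact this.symm

/-- The value at `g` of the permutation character of `G` acting on the cosets of `H`:
the number of fixed cosets.  This is the value of the character induced from the
trivial character of `H`. -/
noncomputable def permCharValue {n : ℕ} (H : Subgroup (Equiv.Perm (Fin n)))
    (g : Equiv.Perm (Fin n)) : ℤ :=
  Nat.card {x : Equiv.Perm (Fin n) ⧸ H // g • x = x}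

/-- `ξ^α`, as a function on `S_n`: the permutation character induced from the trivial
character of the Young subgroup `S_α` when `α` is nonnegative with `|α| = n`, and `0`
otherwise. -/
noncomputable def xi (n : ℕ) (α : ℕ →₀ ℤ) (g : Equiv.Perm (Fin n)) : ℤ :=
  if (∀ i, 0 ≤ α i) ∧ (α.sum fun _ v => v) = (n : ℤ) then permCharValue (youngSubgroup n α) g
  else 0

/-- An `α`-tabloid: a sequence of pairwise disjoint subsets of `{0,…,n-1}` with
`|t i| = α i` for every `i`. -/
def IsTabloid (n : ℕ) (α : ℕ →₀ ℤ) (t : ℕ → Finset (Fin n)) : Prop :=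
  (∀ i j, i ≠ j → Disjoint (t i) (t j)) ∧ ∀ i, ((t i).card : ℤ) = α i

/-- The multiset of (nonzero) parts of a finitely supported sequence. -/
def partsOf (β : ℕ →₀ ℕ) : Multiset ℕ := β.support.val.map β

/-- `σ` has cycle type `β` (with `1`s in `β` recording fixed points). -/
def HasCycleType {n : ℕ} (σ : Equiv.Perm (Fin n)) (β : ℕ →₀ ℕ) : Prop :=
  (β.sum fun _ v => v) = n ∧ σ.cycleType = Multiset.filter (fun k => 2 ≤ k) (partsOf β)

/-- A nonnegative sequence regarded as an integer sequence. -/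
noncomputable def natToZ (β : ℕ →₀ ℕ) : ℕ →₀ ℤ := Finsupp.mapRange Int.ofNat rfl β

/-- The virtual character `χ^α = ∑_{σ ∈ S_l} sgn σ · ξ^{α + σ - id_l}` (0-indexed,
the sequence `α + σ - id_l` has `i`-th entry `α i + σ i - i`). -/
noncomputable def chi (n l : ℕ) (α : ℕ →₀ ℤ) (g : Equiv.Perm (Fin n)) : ℤ :=
  ∑ σ : Equiv.Perm (Fin l),
    (Equiv.Perm.sign σ : ℤ) *
      xi n (α + ∑ i : Fin l, Finsupp.single (i : ℕ) (((σ i : ℕ) : ℤ) - (i : ℕ))) g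

/-- `ζ^α`, the irreducible character of `S_n` corresponding to the partition `α` of `n`,
given by the determinantal formula `ζ^α = χ^α` (with `l = n ≥ l(α)`). -/
noncomputable def zeta (n : ℕ) (α : ℕ →₀ ℕ) (g : Equiv.Perm (Fin n)) : ℤ :=
  chi n n (natToZ α) g

/-- `α` is a partition of `n`: weakly decreasing with `|α| = n`. -/
def IsPartitionOf (α : ℕ →₀ ℕ) (n : ℕ) : Prop :=
  (∀ i, α (i + 1) ≤ α i) ∧ (α.sum fun _ v => v) = n

/-- The `ℤ`-linear map `δ⁻_l` on the free `ℤ`-module on sequences,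
`x^α ↦ ∑_{i=1}^l (α_i - 1) x^{α - ε_i}`. -/
noncomputable def deltaMinus (l : ℕ) : ((ℕ →₀ ℤ) →₀ ℤ) →ₗ[ℤ] ((ℕ →₀ ℤ) →₀ ℤ) :=
  Finsupp.lift _ ℤ _ fun α =>
    ∑ i ∈ Finset.range l, (α i - 1) • Finsupp.single (α - Finsupp.single i 1) (1 : ℤ)

/-- The `ℤ`-linear map `D_l`, `x^α ↦ ∑_{σ ∈ S_l} sgn(σ) x^{α + σ - 1_l}` (the sequence
`α + σ - 1_l` has `i`-th entry `α i + σ(i) - 1`, written `0`-indexed). -/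
noncomputable def Dmap (l : ℕ) : ((ℕ →₀ ℤ) →₀ ℤ) →ₗ[ℤ] ((ℕ →₀ ℤ) →₀ ℤ) :=
  Finsupp.lift _ ℤ _ fun α =>
    ∑ σ : Equiv.Perm (Fin l),
      (Equiv.Perm.sign σ : ℤ) •
        Finsupp.single (α + ∑ i : Fin l, Finsupp.single (i : ℕ) (((σ i : ℕ) : ℤ))) (1 : ℤ)

noncomputable def Sv (l : ℕ) (σ : Equiv.Perm (Fin l)) : ℕ →₀ ℤ :=
  ∑ i : Fin l, Finsupp.single (i : ℕ) (((σ i : ℕ) : ℤ))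

lemma Sv_apply (l : ℕ) (σ : Equiv.Perm (Fin l)) (k : ℕ) :
    Sv l σ k = if h : k < l then ((σ ⟨k, h⟩ : ℕ) : ℤ) else 0 := by
  rw [Sv, Finsupp.finset_sum_apply]
  split_ifs with h
  · rw [Finset.sum_eq_single (⟨k, h⟩ : Fin l)]
    · simp
    · intro b _ hb
      rw [Finsupp.single_apply, if_neg]
      exact fun hbk => hb (Fin.ext hbk)
    · simp
  · apply Finset.sum_eq_zero
    intro i _
    rw [Finsupp.single_apply, if_neg]
    exact fun hik => h (hik ▸ i.isLt)

lemma Sv_swap {m : ℕ} (σ : Equiv.Perm (Fin (m + 1))) (i : Fin (m + 1)) (h : σ i ≠ 0) :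
    Sv (m + 1) (Equiv.swap (σ i) (σ i - 1) * σ)
      = Sv (m + 1) σ + Finsupp.single ((σ⁻¹ (σ i - 1) : Fin (m + 1)) : ℕ) 1
        - Finsupp.single (i : ℕ) 1 := by
  set j := σ⁻¹ (σ i - 1) with hj
  have hσj : σ j = σ i - 1 := Equiv.apply_symm_apply σ _
  have hv0 : (σ i : ℕ) ≠ 0 := fun e => h (Fin.ext e)
  have hcoe : ((σ i - 1 : Fin (m + 1)) : ℕ) = (σ i : ℕ) - 1 := by
    rw [Fin.coe_sub_one, if_neg h]
  have hcoeZ : (((σ i - 1 : Fin (m + 1)) : ℕ) : ℤ) = ((σ i : ℕ) : ℤ) - 1 := by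
    rw [hcoe]; omega
  have hne : σ i - 1 ≠ σ i := by
    intro e
    have := congrArg Fin.val e
    rw [hcoe] at this
    omega
  have hij : j ≠ i := by
    intro e
    apply hne
    rw [← hσj, e]
  ext k
  rw [Finsupp.sub_apply, Finsupp.add_apply, Sv_apply, Sv_apply, Finsupp.single_apply,
    Finsupp.single_apply]
  by_cases hk : k < m + 1
  · rw [dif_pos hk, dif_pos hk]
    by_cases hik : (i : ℕ) = k
    · have hik' : i = ⟨k, hk⟩ := Fin.ext hik
      have hjk : ¬(j : ℕ) = k := fun e => hij (by rw [show j = (⟨k, hk⟩ : Fin (m+1)) from Fin.ext e, ← hik'])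
      rw [if_neg hjk, if_pos hik, ← hik']
      simp only [Equiv.Perm.mul_apply, Equiv.swap_apply_left]
      rw [hcoeZ]; ring
    · by_cases hjk : (j : ℕ) = k
      · have hjk' : j = ⟨k, hk⟩ := Fin.ext hjk
        rw [if_pos hjk, if_neg hik, ← hjk']
        simp only [Equiv.Perm.mul_apply, hσj, Equiv.swap_apply_right, hcoeZ]
        ring
      · rw [if_neg hjk, if_neg hik]
        simp only [Equiv.Perm.mul_apply]
        rw [Equiv.swap_apply_of_ne_of_ne]
        · ring
        · intro e
          exact hik (congrArg Fin.val (σ.injective e)).symm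
        · rw [← hσj]
          intro e
          exact hjk (congrArg Fin.val (σ.injective e)).symm
  · rw [dif_neg hk, dif_neg hk, if_neg (fun e : (j:ℕ) = k => hk (e ▸ j.isLt)),
      if_neg (fun e : (i:ℕ) = k => hk (e ▸ i.isLt))]
    ring

lemma key_cancel (l : ℕ) (α : ℕ →₀ ℤ) :
    ∑ p : Equiv.Perm (Fin l) × Fin l,
      ((Equiv.Perm.sign p.1 : ℤ) * ((p.1 p.2 : ℕ) : ℤ)) •
        Finsupp.single (α + Sv l p.1 - Finsupp.single ((p.2 : ℕ)) 1) (1 : ℤ) = 0 := by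
  rcases l with - | m
  · apply Finset.sum_eq_zero
    intro p _
    exact p.2.elim0
  set g : Equiv.Perm (Fin (m + 1)) × Fin (m + 1) → Equiv.Perm (Fin (m + 1)) × Fin (m + 1) :=
    fun p =>
      if p.1 p.2 = 0 then p
      else (Equiv.swap (p.1 p.2) (p.1 p.2 - 1) * p.1, p.1⁻¹ (p.1 p.2 - 1)) with hg
  apply Finset.sum_ninvolution g
  · -- f p + f (g p) = 0
    rintro ⟨σ, i⟩
    by_cases h0 : σ i = 0
    · have hgp : g (σ, i) = (σ, i) := by rw [hg]; simp only [if_pos h0]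
      rw [hgp]
      simp [h0]
    · have hσj : σ (σ⁻¹ (σ i - 1)) = σ i - 1 := Equiv.apply_symm_apply σ _
      have hne : σ i - 1 ≠ σ i := by
        intro e
        have h1 := congrArg Fin.val e
        rw [Fin.coe_sub_one, if_neg h0] at h1
        have : (σ i : ℕ) ≠ 0 := fun e => h0 (Fin.ext e)
        omega
      have hgp : g (σ, i) = (Equiv.swap (σ i) (σ i - 1) * σ, σ⁻¹ (σ i - 1)) := by
        rw [hg]; simp only [if_neg h0]
      rw [hgp]
      simp only
      have hval : ((Equiv.swap (σ i) (σ i - 1) * σ) (σ⁻¹ (σ i - 1))) = σ i := by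
        rw [Equiv.Perm.mul_apply, hσj, Equiv.swap_apply_right]
      have hsign : (Equiv.Perm.sign (Equiv.swap (σ i) (σ i - 1) * σ) : ℤ)
          = -(Equiv.Perm.sign σ : ℤ) := by
        rw [map_mul, Equiv.Perm.sign_swap hne.symm]
        push_cast
        ring
      have hexp : α + Sv (m + 1) (Equiv.swap (σ i) (σ i - 1) * σ)
            - Finsupp.single ((σ⁻¹ (σ i - 1) : Fin (m + 1)) : ℕ) 1
          = α + Sv (m + 1) σ - Finsupp.single ((i : ℕ)) 1 := by
        rw [Sv_swap σ i h0]
        abel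
      rw [hval, hsign, hexp, ← add_smul]
      have hc : (Equiv.Perm.sign σ : ℤ) * ((σ i : ℕ) : ℤ)
          + -(Equiv.Perm.sign σ : ℤ) * ((σ i : ℕ) : ℤ) = 0 := by ring
      rw [hc, zero_smul]
  · -- f p ≠ 0 → g p ≠ p
    rintro ⟨σ, i⟩ hfp
    have h0 : σ i ≠ 0 := by
      intro e
      apply hfp
      simp [e]
    have hgp : g (σ, i) = (Equiv.swap (σ i) (σ i - 1) * σ, σ⁻¹ (σ i - 1)) := by
      rw [hg]; simp only [if_neg h0]
    rw [hgp]
    intro e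
    have h1 : Equiv.swap (σ i) (σ i - 1) * σ = σ := congrArg Prod.fst e
    have h2 := congrArg (fun τ : Equiv.Perm (Fin (m + 1)) => τ i) h1
    simp only [Equiv.Perm.mul_apply, Equiv.swap_apply_left] at h2
    have hne : σ i - 1 ≠ σ i := by
      intro e'
      have h1' := congrArg Fin.val e'
      rw [Fin.coe_sub_one, if_neg h0] at h1'
      have : (σ i : ℕ) ≠ 0 := fun e'' => h0 (Fin.ext e'')
      omega
    exact hne h2
  · intro p
    exact Finset.mem_univ _
  · -- g (g p) = p
    rintro ⟨σ, i⟩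
    by_cases h0 : σ i = 0
    · have hgp : g (σ, i) = (σ, i) := by rw [hg]; simp only [if_pos h0]
      rw [hgp, hgp]
    · have hgp : g (σ, i) = (Equiv.swap (σ i) (σ i - 1) * σ, σ⁻¹ (σ i - 1)) := by
        rw [hg]; simp only [if_neg h0]
      have hσj : σ (σ⁻¹ (σ i - 1)) = σ i - 1 := Equiv.apply_symm_apply σ _
      have hval : ((Equiv.swap (σ i) (σ i - 1) * σ) (σ⁻¹ (σ i - 1))) = σ i := by
        rw [Equiv.Perm.mul_apply, hσj, Equiv.swap_apply_right]
      have hval2 : σ i - 1 = (Equiv.swap (σ i) (σ i - 1) * σ) i := by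
        rw [Equiv.Perm.mul_apply, Equiv.swap_apply_left]
      rw [hgp, hg]
      simp only [hval, if_neg h0]
      simp only [Prod.mk.injEq]
      constructor
      · rw [← mul_assoc, Equiv.swap_mul_self, one_mul]
      · rw [Equiv.Perm.inv_eq_iff_eq]
        exact hval2

lemma key_cancel' (l : ℕ) (α : ℕ →₀ ℤ) :
    ∑ σ : Equiv.Perm (Fin l), ∑ i ∈ Finset.range l,
      ((Equiv.Perm.sign σ : ℤ) * Sv l σ i) •
        Finsupp.single (α + Sv l σ - Finsupp.single i 1) (1 : ℤ) = 0 := by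
  have h := key_cancel l α
  rw [Fintype.sum_prod_type] at h
  rw [← h]
  apply Finset.sum_congr rfl
  intro σ _
  rw [← Fin.sum_univ_eq_sum_range (fun i => ((Equiv.Perm.sign σ : ℤ) * Sv l σ i) •
    Finsupp.single (α + Sv l σ - Finsupp.single i 1) (1 : ℤ)) l]
  apply Finset.sum_congr rfl
  intro i _
  have : Sv l σ (i : ℕ) = ((σ i : ℕ) : ℤ) := by
    rw [Sv_apply, dif_pos i.isLt, Fin.eta]
  rw [this]

/-- `D_l` and `δ⁻_l` commute. -/
theorem stmt4 (l : ℕ) : (Dmap l).comp (deltaMinus l) = (deltaMinus l).comp (Dmap l) := by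
  have hδ : ∀ β : ℕ →₀ ℤ, deltaMinus l (Finsupp.single β 1)
      = ∑ i ∈ Finset.range l, (β i - 1) • Finsupp.single (β - Finsupp.single i 1) (1 : ℤ) := by
    intro β
    rw [deltaMinus, Finsupp.lift_apply, Finsupp.sum_single_index, one_smul]
    rw [zero_smul]
  have hD : ∀ β : ℕ →₀ ℤ, Dmap l (Finsupp.single β 1)
      = ∑ σ : Equiv.Perm (Fin l),
          (Equiv.Perm.sign σ : ℤ) • Finsupp.single (β + Sv l σ) (1 : ℤ) := by
    intro β
    rw [Dmap, Finsupp.lift_apply, Finsupp.sum_single_index, one_smul]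
    · rfl
    · rw [zero_smul]
  apply Finsupp.lhom_ext'
  intro α
  apply LinearMap.ext_ring
  simp only [LinearMap.comp_apply, Finsupp.lsingle_apply]
  rw [hδ α, hD α, map_sum, map_sum]
  simp only [map_smul, hδ, hD, Finset.smul_sum]
  rw [Finset.sum_comm, ← sub_eq_zero, ← Finset.sum_sub_distrib]
  have hterm : ∀ σ : Equiv.Perm (Fin l), ∀ i ∈ Finset.range l,
      (α i - 1) • ((Equiv.Perm.sign σ : ℤ) •
          Finsupp.single (α - Finsupp.single i 1 + Sv l σ) (1 : ℤ))
        - (Equiv.Perm.sign σ : ℤ) • (((α + Sv l σ) i - 1) •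
          Finsupp.single (α + Sv l σ - Finsupp.single i 1) (1 : ℤ))
      = -(((Equiv.Perm.sign σ : ℤ) * Sv l σ i) •
          Finsupp.single (α + Sv l σ - Finsupp.single i 1) (1 : ℤ)) := by
    intro σ i _
    rw [sub_add_eq_add_sub, smul_smul, smul_smul, ← sub_smul, ← neg_smul, Finsupp.add_apply]
    congr 1
    ring
  simp only [← Finset.sum_sub_distrib]
  rw [Finset.sum_congr rfl (fun σ _ => Finset.sum_congr rfl (hterm σ))]
  simp only [Finset.sum_neg_distrib]
  rw [key_cancel' l α, neg_zero]
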